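/- Let a group Γ act freely on a connected groupoid G (no non-identity element fixes an object). Then the orbit morphism p : G → G/Γ to the orbit groupoid is a regular covering projection. -/

import Mathlib

open CategoryTheory

/-- The costar `t(x)`: the set of all arrows with codomain `x`. -/
def Costar {G : Type*} [Groupoid G] (x : G) := Σ y : G, y ⟶ x

/-- The map `t(x) → t(p x)` induced by a functor `p`. -/
def costarMap {H G : Type*} [Groupoid H] [Groupoid G] (p : H ⥤ G) (x : H) :
    Costar x → Costar (p.obj x) := fun f => ⟨p.obj f.1, p.map f.2⟩

/-- `p` is a covering projection of groupoids. -/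
def IsCoveringProjection {H G : Type*} [Groupoid H] [Groupoid G] (p : H ⥤ G) : Prop :=
  ∀ x : H, Function.Bijective (costarMap p x)

/-- A groupoid is connected if any two objects are joined by an arrow. -/
def IsConnectedGroupoid (G : Type*) [Groupoid G] : Prop := ∀ x y : G, Nonempty (x ⟶ y)

/-- The induced homomorphism on vertex (fundamental) groups. -/
def vertexHom {H G : Type*} [Groupoid H] [Groupoid G] (p : H ⥤ G) (x : H) :
    (x ⟶ x) →* (p.obj x ⟶ p.obj x) where
  toFun := p.map
  map_one' := p.map_id x
  map_mul' f g := p.map_comp f g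

/-- A covering projection is regular if every image vertex subgroup is normal. -/
def IsRegularCovering {Gt G : Type*} [Groupoid Gt] [Groupoid G] (p : Gt ⥤ G) : Prop :=
  ∀ x : Gt, ((vertexHom p x).range).Normal

/-- A covering transformation: an automorphism of the total groupoid over the base. -/
def IsCoveringTransformation {Gt G : Type*} [Groupoid Gt] [Groupoid G] (p : Gt ⥤ G)
    (h : Gt ⥤ Gt) : Prop :=
  (∃ k : Gt ⥤ Gt, h ⋙ k = 𝟭 Gt ∧ k ⋙ h = 𝟭 Gt) ∧ h ⋙ p = p

/-- The group `Cov(G̃/G)` of covering transformations, as a subgroup of the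
automorphism group of `G̃` in `Cat`. -/
def covGroup {Gt G : Type*} [Groupoid Gt] [Groupoid G] (p : Gt ⥤ G) :
    Subgroup (Aut (Cat.of Gt)) where
  carrier := {h | h.hom.toFunctor ⋙ p = p}
  one_mem' := rfl
  mul_mem' := by
    intro a b ha hb
    show (b.hom.toFunctor ⋙ a.hom.toFunctor) ⋙ p = p
    refine (Functor.assoc _ _ _).trans ?_
    show b.hom.toFunctor ⋙ (a.hom.toFunctor ⋙ p) = p
    rw [ha, hb]
  inv_mem' := by
    intro a ha
    show a.inv.toFunctor ⋙ p = p
    conv_lhs => rw [← ha]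
    show a.inv.toFunctor ⋙ a.hom.toFunctor ⋙ p = p
    refine (Functor.assoc _ _ _).symm.trans ?_
    have : (a.inv.toFunctor ⋙ a.hom.toFunctor) = 𝟭 _ := congrArg Cat.Hom.toFunctor a.inv_hom_id
    rw [this]
    rfl

/-- A universal covering: a connected covering projection whose total groupoid
has trivial vertex groups. -/
def IsUniversalCovering {Gt G : Type*} [Groupoid Gt] [Groupoid G] (p : Gt ⥤ G) : Prop :=
  IsCoveringProjection p ∧ IsConnectedGroupoid Gt ∧ IsConnectedGroupoid G ∧
    ∀ (x : Gt) (f : x ⟶ x), f = 𝟙 x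

/-- A group action (by functors) on a groupoid is free if no non-identity element
fixes an object. -/
def FreeGroupoidAction {Γ : Type*} [Group Γ] {G : Type} [Groupoid.{0} G]
    (φ : Γ →* Aut (Cat.of G)) : Prop :=
  ∀ γ : Γ, γ ≠ 1 → ∀ x : G, (φ γ).hom.toFunctor.obj x ≠ x

/-- `(Q, q)` is an orbit groupoid of the action `φ` of `Γ` on `G`: the orbit
morphism `q` coequalizes the action and is universal with this property. -/
def IsOrbitGroupoid {Γ : Type*} [Group Γ] {G : Type} [Groupoid.{0} G]
    (φ : Γ →* Aut (Cat.of G)) {Q : Type} [Groupoid.{0} Q] (q : G ⥤ Q) : Prop :=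
  (∀ γ : Γ, (φ γ).hom.toFunctor ⋙ q = q) ∧
  ∀ (H : Type) (_ : Groupoid.{0} H) (f : G ⥤ H), (∀ γ : Γ, (φ γ).hom.toFunctor ⋙ f = f) →
    ∃! f' : Q ⥤ H, q ⋙ f' = f

namespace OrbitProof
variable {Γ : Type*} [Group Γ] {G : Type} [Groupoid.{0} G]

/-- The action functor of an element of the image subgroup. -/
def act (φ : Γ →* Aut (Cat.of G)) (δ : φ.range) : G ⥤ G := (δ : Aut (Cat.of G)).hom.toFunctor

variable (φ : Γ →* Aut (Cat.of G))

lemma act_one : act φ 1 = 𝟭 G := rfl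

lemma act_mul (a b : φ.range) : act φ (a * b) = act φ b ⋙ act φ a := rfl

lemma act_obj_one (x : G) : (act φ 1).obj x = x := rfl

lemma act_obj_mul (a b : φ.range) (x : G) :
    (act φ (a * b)).obj x = (act φ a).obj ((act φ b).obj x) := rfl

lemma act_obj_cancel (a : φ.range) (x : G) :
    (act φ a).obj ((act φ a⁻¹).obj x) = x := by
  rw [← act_obj_mul, mul_inv_cancel, act_obj_one]

lemma act_obj_cancel' (a : φ.range) (x : G) :
    (act φ a⁻¹).obj ((act φ a).obj x) = x := by
  rw [← act_obj_mul, inv_mul_cancel, act_obj_one]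

/-- For a free action, elements of the image subgroup fixing an object are trivial. -/
lemma act_fix_eq_one (hfree : FreeGroupoidAction φ) {a : φ.range} {x : G}
    (h : (act φ a).obj x = x) : a = 1 := by
  obtain ⟨av, γ, hγ⟩ := a
  by_contra hne
  have hγne : γ ≠ 1 := by
    rintro rfl
    exact hne (by ext : 1; simp [← hγ, map_one])
  exact hfree γ hγne x (by simpa [act, hγ] using h)

lemma act_obj_cancel_eq (hfree : FreeGroupoidAction φ) {a b : φ.range} {x : G}
    (h : (act φ a).obj x = (act φ b).obj x) : a = b := by
  have h2 : (act φ (b⁻¹ * a)).obj x = x := by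
    rw [act_obj_mul, h, act_obj_cancel']
  have h3 := act_fix_eq_one φ hfree h2
  have := congrArg (fun z => b * z) h3
  simpa [mul_assoc] using this

/-- The orbit setoid on objects. -/
def orel : Setoid G where
  r x y := ∃ δ : φ.range, (act φ δ).obj x = y
  iseqv := by
    refine ⟨fun x => ⟨1, rfl⟩, ?_, ?_⟩
    · rintro x y ⟨δ, rfl⟩
      exact ⟨δ⁻¹, act_obj_cancel' φ δ x⟩
    · rintro x y z ⟨δ, rfl⟩ ⟨ε, rfl⟩
      exact ⟨ε * δ, rfl⟩

/-- Objects of the concrete orbit groupoid: orbits. -/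
def Ob := Quotient (orel φ)

def omk (x : G) : Ob φ := Quotient.mk (orel φ) x

noncomputable def osec (c : Ob φ) : G := Quotient.out c

lemma omk_osec (c : Ob φ) : omk φ (osec φ c) = c := Quotient.out_eq c

lemma osec_spec (x : G) : ∃ δ : φ.range, (act φ δ).obj x = osec φ (omk φ x) :=
  (orel φ).symm (Quotient.mk_out x)

/-- `tau x` translates `x` to the chosen orbit representative. -/
noncomputable def tau (x : G) : φ.range := Classical.choose (osec_spec φ x)

lemma tau_spec (x : G) : (act φ (tau φ x)).obj x = osec φ (omk φ x) :=
  Classical.choose_spec (osec_spec φ x)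

/-- Arrows of the concrete orbit groupoid. -/
abbrev OHom (c d : Ob φ) : Type := Σ δ : φ.range, (osec φ c ⟶ (act φ δ).obj (osec φ d))

lemma OHom.ext {c d : Ob φ} {f g : OHom φ c d} (h1 : f.1 = g.1)
    (h2 : f.2 ≫ eqToHom (by rw [h1]) = g.2) : f = g := by
  obtain ⟨a, fa⟩ := f
  obtain ⟨b, gb⟩ := g
  dsimp at h1
  subst h1
  obtain rfl : fa = gb := by simpa using h2
  rfl

end OrbitProof
namespace OrbitProof
variable {Γ : Type*} [Group Γ] {G : Type} [Groupoid.{0} G]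
variable (φ : Γ →* Aut (Cat.of G))

lemma act_map_mul (a b : φ.range) {x y : G} (f : x ⟶ y) :
    (act φ a).map ((act φ b).map f) =
      eqToHom (act_obj_mul φ a b x).symm ≫ (act φ (a * b)).map f ≫
        eqToHom (act_obj_mul φ a b y) := by
  have := Functor.congr_hom (act_mul φ a b) f
  simp only [Functor.comp_map] at this
  rw [this]
  simp

lemma act_map_one {x y : G} (f : x ⟶ y) :
    (act φ 1).map f = eqToHom (act_obj_one φ x) ≫ f ≫ eqToHom (act_obj_one φ y).symm := by
  have := Functor.congr_hom (act_one φ) f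
  simpa using this

noncomputable instance obcs : CategoryStruct (Ob φ) where
  Hom c d := OHom φ c d
  id c := ⟨1, eqToHom (act_obj_one φ (osec φ c)).symm⟩
  comp {a b c} f g :=
    ⟨f.1 * g.1, f.2 ≫ (act φ f.1).map g.2 ≫ eqToHom (act_obj_mul φ f.1 g.1 (osec φ c)).symm⟩

@[simp] lemma comp_fst {a b c : Ob φ} (f : a ⟶ b) (g : b ⟶ c) : (f ≫ g).1 = f.1 * g.1 := rfl

@[simp] lemma comp_snd {a b c : Ob φ} (f : a ⟶ b) (g : b ⟶ c) :
    (f ≫ g).2 = f.2 ≫ (act φ f.1).map g.2 ≫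
      eqToHom (act_obj_mul φ f.1 g.1 (osec φ c)).symm := rfl

@[simp] lemma id_fst (c : Ob φ) : (𝟙 c : c ⟶ c).1 = 1 := rfl

@[simp] lemma id_snd (c : Ob φ) :
    (𝟙 c : c ⟶ c).2 = eqToHom (act_obj_one φ (osec φ c)).symm := rfl

lemma oid_comp {a b : Ob φ} (f : a ⟶ b) : 𝟙 a ≫ f = f := by
  refine OHom.ext φ (one_mul _) ?_
  simp only [comp_snd, id_snd, id_fst, act_map_one]
  simp

lemma ocomp_id {a b : Ob φ} (f : a ⟶ b) : f ≫ 𝟙 b = f := by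
  refine OHom.ext φ (mul_one _) ?_
  simp only [comp_snd, id_snd]
  simp [eqToHom_map]

lemma oassoc {a b c d : Ob φ} (f : a ⟶ b) (g : b ⟶ c) (h : c ⟶ d) :
    (f ≫ g) ≫ h = f ≫ g ≫ h := by
  refine OHom.ext φ (mul_assoc _ _ _) ?_
  simp only [comp_snd, comp_fst]
  rw [Functor.congr_hom (act_mul φ f.1 g.1) h.2]
  simp only [Functor.comp_map, Functor.map_comp, eqToHom_map, Category.assoc]
  simp

noncomputable def oinv {a b : Ob φ} (f : a ⟶ b) : b ⟶ a :=
  ⟨f.1⁻¹, eqToHom (by rw [← act_obj_mul, inv_mul_cancel, act_obj_one]) ≫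
      (act φ f.1⁻¹).map (Groupoid.inv f.2)⟩

lemma oinv_comp {a b : Ob φ} (f : a ⟶ b) : oinv φ f ≫ f = 𝟙 b := by
  refine OHom.ext φ (inv_mul_cancel _) ?_
  simp only [comp_snd, id_snd, oinv]
  simp only [Category.assoc]
  rw [← Functor.map_comp_assoc (act φ f.1⁻¹) (Groupoid.inv f.2) f.2, Groupoid.inv_comp]
  simp
  exact eqToHom_trans _ _

lemma ocomp_inv {a b : Ob φ} (f : a ⟶ b) : f ≫ oinv φ f = 𝟙 a := by
  refine OHom.ext φ (mul_inv_cancel _) ?_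
  simp only [comp_snd, id_snd, oinv]
  rw [Functor.map_comp, act_map_mul]
  rw [Functor.congr_hom (show act φ (f.1 * f.1⁻¹) = 𝟭 G by rw [mul_inv_cancel, act_one])
    (Groupoid.inv f.2)]
  simp [eqToHom_map]
  exact eqToHom_trans _ _

noncomputable instance gpd : Groupoid (Ob φ) where
  id_comp := oid_comp φ
  comp_id := ocomp_id φ
  assoc := oassoc φ
  inv := oinv φ
  inv_comp := oinv_comp φ
  comp_inv := ocomp_inv φ

lemma act_map_congr {a b : φ.range} (h : a = b) {x y : G} (f : x ⟶ y) :
    (act φ a).map f = eqToHom (by rw [h]) ≫ (act φ b).map f ≫ eqToHom (by rw [h]) := by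
  subst h; simp

lemma q0_aux (x y : G) : (act φ (tau φ x)).obj y =
    (act φ (tau φ x * (tau φ y)⁻¹)).obj (osec φ (omk φ y)) := by
  rw [← tau_spec φ y, ← act_obj_mul, inv_mul_cancel_right]

/-- The orbit morphism onto the concrete orbit groupoid. -/
noncomputable def q0 : G ⥤ Ob φ where
  obj := omk φ
  map {x y} f := ⟨tau φ x * (tau φ y)⁻¹,
    eqToHom (tau_spec φ x).symm ≫ (act φ (tau φ x)).map f ≫ eqToHom (q0_aux φ x y)⟩
  map_id x := by
    refine OHom.ext φ (mul_inv_cancel _) ?_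
    simp only [id_snd, Functor.map_id]
    simp
  map_comp {x y z} f g := by
    refine OHom.ext φ (by simp only [comp_fst]; group) ?_
    simp only [comp_snd, comp_fst, Functor.map_comp, eqToHom_map, Category.assoc]
    rw [act_map_mul]
    rw [act_map_congr φ (show tau φ x * (tau φ y)⁻¹ * tau φ y = tau φ x from
      inv_mul_cancel_right _ _) g]
    simp

attribute [reducible] q0

@[simp] lemma q0_obj (x : G) : (q0 φ).obj x = omk φ x := rfl

lemma q0_map {x y : G} (f : x ⟶ y) : (q0 φ).map f = ⟨tau φ x * (tau φ y)⁻¹,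
    eqToHom (tau_spec φ x).symm ≫ (act φ (tau φ x)).map f ≫ eqToHom (q0_aux φ x y)⟩ := rfl

lemma omk_act (δ : φ.range) (x : G) : omk φ ((act φ δ).obj x) = omk φ x :=
  Quotient.sound ⟨δ⁻¹, act_obj_cancel' φ δ x⟩

lemma eqToHom_eq {c d : Ob φ} (h : c = d) :
    eqToHom h = (⟨1, eqToHom (show osec φ c = (act φ 1).obj (osec φ d) by
      rw [act_obj_one, h])⟩ : OHom φ c d) := by
  subst h; rfl

@[simp] lemma eqToHom_fst {c d : Ob φ} (h : c = d) : (eqToHom h : c ⟶ d).1 = 1 := by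
  subst h; rfl

lemma eqToHom_snd {c d : Ob φ} (h : c = d) : (eqToHom h : c ⟶ d).2 =
    eqToHom (show osec φ c = (act φ (eqToHom h : c ⟶ d).1).obj (osec φ d) by
      subst h; exact (act_obj_one φ _).symm) := by
  subst h; rfl

lemma act_eqToHom_fst_map {c d : Ob φ} (h : c = d) {x y : G} (f : x ⟶ y) :
    (act φ (eqToHom h : c ⟶ d).1).map f =
      eqToHom (by rw [eqToHom_fst, act_obj_one]) ≫ f ≫
      eqToHom (by rw [eqToHom_fst, act_obj_one]) := by
  rw [act_map_congr φ (eqToHom_fst φ h), act_map_one]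
  simp

variable {φ} in
lemma tau_act (hfree : FreeGroupoidAction φ) (δ : φ.range) (x : G) :
    tau φ ((act φ δ).obj x) = tau φ x * δ⁻¹ := by
  refine act_obj_cancel_eq φ hfree (x := (act φ δ).obj x) ?_
  rw [tau_spec φ ((act φ δ).obj x), omk_act, ← act_obj_mul, inv_mul_cancel_right, tau_spec]

variable {φ} in
lemma q0_invariant (hfree : FreeGroupoidAction φ) (δ : φ.range) :
    act φ δ ⋙ q0 φ = q0 φ := by
  refine CategoryTheory.Functor.ext ?_ ?_
  · intro x
    rw [Functor.comp_obj]
    exact omk_act φ δ x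
  intro x y f
  show (q0 φ).map ((act φ δ).map f) = _
  refine OHom.ext φ ?_ ?_
  · show tau φ ((act φ δ).obj x) * (tau φ ((act φ δ).obj y))⁻¹ = _
    simp only [eqToHom_eq, comp_fst, q0_map, tau_act hfree]
    group
  · simp only [eqToHom_eq, comp_snd, comp_fst, q0_map, eqToHom_map, Functor.map_comp,
      Category.assoc]
    rw [act_map_congr φ (tau_act hfree δ x) ((act φ δ).map f), act_map_mul]
    rw [act_map_congr φ (show tau φ x * δ⁻¹ * δ = tau φ x from inv_mul_cancel_right _ _) f]
    simp [eqToHom_snd, act_eqToHom_fst_map, eqToHom_map]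

variable {φ} in
lemma tau_osec (hfree : FreeGroupoidAction φ) (c : Ob φ) : tau φ (osec φ c) = 1 := by
  refine act_fix_eq_one φ hfree (x := osec φ c) ?_
  rw [tau_spec, omk_osec]

variable {φ} in
/-- Every arrow of the orbit groupoid is an orbit of an arrow of `G`. -/
lemma arrow_decomp (hfree : FreeGroupoidAction φ) {c d : Ob φ} (u : c ⟶ d) :
    u = eqToHom (omk_osec φ c).symm ≫ (q0 φ).map u.2 ≫
      eqToHom (by rw [q0_obj, omk_act, omk_osec]) := by
  refine (OHom.ext φ ?_ ?_).symm
  · simp only [comp_fst, eqToHom_fst, q0_map, one_mul, mul_one]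
    rw [tau_osec hfree, tau_act hfree, tau_osec hfree]
    group
  · simp only [comp_snd, comp_fst, eqToHom_snd, q0_map, eqToHom_map, Functor.map_comp,
      Category.assoc, act_eqToHom_fst_map]
    rw [act_map_congr φ (tau_osec hfree c) u.2, act_map_one]
    simp

section Univ
variable {H : Type} [Groupoid.{0} H] (f : G ⥤ H) (hf : ∀ δ : φ.range, act φ δ ⋙ f = f)

/-- The functor induced on the concrete orbit groupoid. -/
noncomputable def fbar : Ob φ ⥤ H where
  obj c := f.obj (osec φ c)
  map {c d} u := f.map u.2 ≫ eqToHom (Functor.congr_obj (hf u.1) (osec φ d))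
  map_id c := by
    simp only [id_snd, eqToHom_map]
    simp
  map_comp {c d e} u v := by
    simp only [comp_snd, comp_fst, Functor.map_comp, eqToHom_map, Category.assoc]
    have : f.map ((act φ u.1).map v.2) = (act φ u.1 ⋙ f).map v.2 := rfl
    rw [this, Functor.congr_hom (hf u.1) v.2]
    simp

lemma q0_fbar : q0 φ ⋙ fbar φ f hf = f := by
  refine CategoryTheory.Functor.ext ?_ ?_
  · intro x
    show f.obj (osec φ (omk φ x)) = f.obj x
    rw [← tau_spec φ x]
    exact Functor.congr_obj (hf (tau φ x)) x
  · intro x y g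
    show f.map ((q0 φ).map g).2 ≫ _ = _
    simp only [q0_map, Functor.map_comp, eqToHom_map, Category.assoc]
    have : f.map ((act φ (tau φ x)).map g) = (act φ (tau φ x) ⋙ f).map g := rfl
    rw [this, Functor.congr_hom (hf (tau φ x)) g]
    simp
    exact rfl

variable {φ} in
lemma fbar_unique (hfree : FreeGroupoidAction φ) (g' : Ob φ ⥤ H)
    (hg' : q0 φ ⋙ g' = f) : g' = fbar φ f hf := by
  refine CategoryTheory.Functor.ext ?_ ?_
  · intro c
    show _ = f.obj (osec φ c)
    rw [← Functor.congr_obj hg' (osec φ c)]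
    exact congrArg g'.obj (omk_osec φ c).symm
  · intro c d u
    conv_lhs => rw [arrow_decomp hfree u]
    simp only [Functor.map_comp, eqToHom_map, Category.assoc]
    have : g'.map ((q0 φ).map u.2) = (q0 φ ⋙ g').map u.2 := rfl
    rw [this, Functor.congr_hom hg' u.2]
    show _ = eqToHom _ ≫ (f.map u.2 ≫ eqToHom _) ≫ eqToHom _
    simp
    erw [eqToHom_trans]

include hf in
variable {φ} in
theorem q0_universal (hfree : FreeGroupoidAction φ) :
    ∃! f' : Ob φ ⥤ H, q0 φ ⋙ f' = f :=
  ⟨fbar φ f hf, q0_fbar φ f hf, fun g' hg' => fbar_unique f hf hfree g' hg'⟩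

end Univ

variable {φ} in
theorem q0_orbit (hfree : FreeGroupoidAction φ) : IsOrbitGroupoid φ (q0 φ) := by
  constructor
  · intro γ
    exact q0_invariant hfree ⟨φ γ, γ, rfl⟩
  · intro H instH f hf
    refine q0_universal f ?_ hfree
    rintro ⟨v, γ, rfl⟩
    exact hf γ

lemma heq_fst {c c' d : Ob φ} (h : c = c') {u : c ⟶ d} {v : c' ⟶ d} (huv : HEq u v) :
    u.1 = v.1 := by
  subst h; cases huv; rfl

lemma costar_ext {e c c' : Ob φ} (h : c = c') (u : c ⟶ e) (v : c' ⟶ e)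
    (h1 : u.1 = v.1)
    (h2 : u.2 = eqToHom (congrArg (osec φ) h) ≫ v.2 ≫ eqToHom (by rw [h1])) :
    (⟨c, u⟩ : Costar e) = ⟨c', v⟩ := by
  subst h
  refine congrArg _ (OHom.ext φ h1 ?_)
  rw [h2]
  simp

variable {φ} in
lemma act_map_inj (a : φ.range) {x y : G} {f g : x ⟶ y}
    (h : (act φ a).map f = (act φ a).map g) : f = g := by
  have h2 := congrArg (act φ a⁻¹).map h
  rw [act_map_mul, act_map_mul] at h2
  rw [act_map_congr φ (inv_mul_cancel a) f, act_map_congr φ (inv_mul_cancel a) g,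
    act_map_one, act_map_one] at h2
  simp only [eqToHom_comp_iff, comp_eqToHom_iff] at h2
  simpa using h2

variable {φ} in
lemma act_obj_inj (a : φ.range) {x y : G} (h : (act φ a).obj x = (act φ a).obj y) :
    x = y := by
  have h2 := congrArg (act φ a⁻¹).obj h
  rwa [act_obj_cancel', act_obj_cancel'] at h2

variable {φ} in
theorem q0_covering (hfree : FreeGroupoidAction φ) : IsCoveringProjection (q0 φ) := by
  intro x
  constructor
  · rintro ⟨y, f⟩ ⟨y', f'⟩ hab
    obtain ⟨h1, h2⟩ := Sigma.mk.inj_iff.mp hab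
    have hfst : tau φ y * (tau φ x)⁻¹ = tau φ y' * (tau φ x)⁻¹ := heq_fst φ h1 h2
    have htau : tau φ y = tau φ y' := by
      have := congrArg (fun z => z * tau φ x) hfst
      simpa using this
    obtain rfl : y = y' := by
      refine act_obj_inj (tau φ y) ?_
      rw [tau_spec, htau, tau_spec]
      exact congrArg (osec φ) h1
    obtain h3 : (q0 φ).map f = (q0 φ).map f' := eq_of_heq h2
    obtain ⟨-, h4⟩ := Sigma.mk.inj_iff.mp h3
    have h5 := eq_of_heq h4
    have h6 : (act φ (tau φ y)).map f = (act φ (tau φ y)).map f' := by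
      have := congrArg
        (fun z => eqToHom (tau_spec φ y) ≫ z ≫ eqToHom (q0_aux φ y x).symm) h5
      simpa using this
    rw [act_map_inj (tau φ y) h6]
  · rintro ⟨c, δ, g⟩
    have w : (act φ δ).obj (osec φ (omk φ x)) = (act φ (δ * tau φ x)).obj x := by
      rw [← tau_spec φ x, ← act_obj_mul]
    set y' : G := (act φ (δ * tau φ x)⁻¹).obj (osec φ c) with hy'
    set hmor : y' ⟶ x :=
      (act φ (δ * tau φ x)⁻¹).map (g ≫ eqToHom w) ≫ eqToHom (act_obj_cancel' φ _ x)
    refine ⟨⟨y', hmor⟩, ?_⟩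
    have hc : omk φ y' = c := by rw [hy', omk_act, omk_osec]
    have htau : tau φ y' = δ * tau φ x := by
      rw [hy', tau_act hfree, tau_osec hfree, one_mul, inv_inv]
    show (⟨omk φ y', (q0 φ).map hmor⟩ : Costar (omk φ x)) = ⟨c, ⟨δ, g⟩⟩
    refine costar_ext φ hc _ _ ?_ ?_
    · show tau φ y' * (tau φ x)⁻¹ = δ
      rw [htau, mul_inv_cancel_right]
    · show eqToHom _ ≫ (act φ (tau φ y')).map hmor ≫ eqToHom _ = _
      simp only [hmor, Functor.map_comp, eqToHom_map, Category.assoc]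
      rw [act_map_congr φ htau ((act φ (δ * tau φ x)⁻¹).map g), act_map_mul]
      rw [act_map_congr φ (mul_inv_cancel (δ * tau φ x)) g, act_map_one]
      simp

/-- First projection on a vertex group of the orbit groupoid is a homomorphism. -/
def vfst (c : Ob φ) : (c ⟶ c) →* φ.range where
  toFun u := u.1
  map_one' := rfl
  map_mul' u v := rfl

variable {φ} in
theorem q0_regular : IsRegularCovering (q0 φ) := by
  intro x
  have hker : (vertexHom (q0 φ) x).range = (vfst φ (omk φ x)).ker := by
    ext u
    constructor
    · rintro ⟨f, rfl⟩
      show ((q0 φ).map f).1 = 1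
      simp only [q0_map]
      exact mul_inv_cancel _
    · intro hu
      have h1 : u.1 = 1 := hu
      have px : (act φ (tau φ x)⁻¹).obj (osec φ ((q0 φ).obj x)) = x := by
        rw [q0_obj, ← tau_spec φ x, act_obj_cancel']
      refine ⟨eqToHom px.symm ≫
        (act φ (tau φ x)⁻¹).map (u.2 ≫ eqToHom (show (act φ u.1).obj (osec φ ((q0 φ).obj x)) =
          osec φ ((q0 φ).obj x) by rw [h1, act_obj_one])) ≫
        eqToHom px, ?_⟩
      show (q0 φ).map _ = u
      refine OHom.ext φ ?_ ?_
      · show tau φ x * (tau φ x)⁻¹ = u.1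
        rw [h1, mul_inv_cancel]
      · simp only [q0_map, Functor.map_comp, eqToHom_map, Category.assoc]
        rw [act_map_mul]
        rw [act_map_congr φ (mul_inv_cancel (tau φ x)) u.2, act_map_one]
        simp
  rw [hker]
  exact (vfst φ (omk φ x)).normal_ker

section Transfer

lemma costar_id_bij {Q : Type*} [Groupoid Q] (x : Q) :
    Function.Bijective (costarMap (𝟭 Q) x) := by
  have : costarMap (𝟭 Q) x = id := funext fun ⟨a, b⟩ => rfl
  rw [this]
  exact Function.bijective_id

lemma costar_comp_eq {A B C : Type*} [Groupoid A] [Groupoid B] [Groupoid C]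
    (F : A ⥤ B) (K : B ⥤ C) (x : A) :
    costarMap (F ⋙ K) x = costarMap K (F.obj x) ∘ costarMap F x := rfl

lemma costar_congr_bij {A B : Type*} [Groupoid A] [Groupoid B] {F F' : A ⥤ B} (h : F = F')
    (x : A) (hb : Function.Bijective (costarMap F x)) : Function.Bijective (costarMap F' x) := by
  subst h; exact hb

lemma map_injective_of_inverse {A B : Type*} [Groupoid A] [Groupoid B] {u : A ⥤ B} {v : B ⥤ A}
    (huv : u ⋙ v = 𝟭 A) {a b : A} {f g : a ⟶ b} (h : u.map f = u.map g) : f = g := by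
  have h2 := congrArg v.map h
  have e1 : v.map (u.map f) = (u ⋙ v).map f := rfl
  have e2 : v.map (u.map g) = (u ⋙ v).map g := rfl
  rw [e1, e2, Functor.congr_hom huv f, Functor.congr_hom huv g] at h2
  simp only [eqToHom_comp_iff, comp_eqToHom_iff] at h2
  simpa using h2

lemma normal_congr {A B : Type*} [Groupoid A] [Groupoid B] {F F' : A ⥤ B} (h : F = F') (x : A)
    (hn : ((vertexHom F x).range).Normal) : ((vertexHom F' x).range).Normal := by
  subst h; exact hn

end Transfer

end OrbitProof

open OrbitProof in
theorem orbit_morphism_is_regular_covering {Γ : Type*} [Group Γ] {G : Type} [Groupoid.{0} G]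
    (φ : Γ →* Aut (Cat.of G)) (hfree : FreeGroupoidAction φ)
    (hconn : IsConnectedGroupoid G)
    {Q : Type} [Groupoid.{0} Q] (q : G ⥤ Q) (hq : IsOrbitGroupoid φ q) :
    IsCoveringProjection q ∧ IsRegularCovering q := by
  classical
  -- compare `q` with the concrete orbit morphism `q0 φ`
  obtain ⟨u, hu, -⟩ := hq.2 (Ob φ) (gpd φ) (q0 φ) (fun γ => q0_invariant hfree ⟨φ γ, γ, rfl⟩)
  obtain ⟨v, hv, -⟩ := (q0_orbit hfree).2 Q inferInstance q hq.1
  -- `u` and `v` are mutually inverse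
  have huv : u ⋙ v = 𝟭 Q := by
    obtain ⟨w, -, hwu⟩ := hq.2 Q inferInstance q hq.1
    have h1 : q ⋙ (u ⋙ v) = q := by
      rw [← Functor.assoc, hu, hv]
    rw [hwu (u ⋙ v) h1, hwu (𝟭 Q) rfl]
  have hvu : v ⋙ u = 𝟭 (Ob φ) := by
    obtain ⟨w, -, hwu⟩ := (q0_orbit hfree).2 (Ob φ) (gpd φ) (q0 φ)
      (fun γ => q0_invariant hfree ⟨φ γ, γ, rfl⟩)
    have h1 : q0 φ ⋙ (v ⋙ u) = q0 φ := by
      rw [← Functor.assoc, hv, hu]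
    rw [hwu (v ⋙ u) h1, hwu (𝟭 (Ob φ)) rfl]
  -- `costarMap u` is injective everywhere
  have hinj_u : ∀ (y : Q) (a b : Costar y), costarMap u y a = costarMap u y b → a = b := by
    intro y a b h
    have hbij : Function.Bijective (costarMap (u ⋙ v) y) :=
      costar_congr_bij huv.symm y (costar_id_bij y)
    apply hbij.injective
    rw [costar_comp_eq]
    show costarMap v (u.obj y) (costarMap u y a) = costarMap v (u.obj y) (costarMap u y b)
    rw [h]
  -- `costarMap (q ⋙ u)` is bijective everywhere
  have hqu : ∀ x : G, Function.Bijective (costarMap (q ⋙ u) x) := fun x =>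
    costar_congr_bij hu.symm x (q0_covering hfree x)
  constructor
  · -- covering projection
    intro x
    constructor
    · intro a b h
      apply (hqu x).injective
      rw [costar_comp_eq]
      show costarMap u (q.obj x) (costarMap q x a) = costarMap u (q.obj x) (costarMap q x b)
      rw [h]
    · intro b
      obtain ⟨a, ha⟩ := (hqu x).surjective (costarMap u (q.obj x) b)
      refine ⟨a, hinj_u (q.obj x) _ _ ?_⟩
      exact ha
  · -- regular covering
    intro x
    have hN0 : ((vertexHom (q ⋙ u) x).range).Normal :=
      normal_congr hu.symm x (q0_regular x)
    constructor
    intro n hn k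
    obtain ⟨f, hf⟩ := hn
    have hmem : (vertexHom (q ⋙ u) x) f ∈ (vertexHom (q ⋙ u) x).range := ⟨f, rfl⟩
    have hconj := hN0.conj_mem _ hmem (u.map k)
    obtain ⟨w, hw⟩ := hconj
    refine ⟨w, ?_⟩
    apply map_injective_of_inverse huv
    have e2 : u.map (k * n * k⁻¹) = u.map k ≫ u.map (q.map f) ≫ Groupoid.inv (u.map k) := by
      show u.map ((k ≫ n) ≫ Groupoid.inv k) = _
      have einv : u.map (Groupoid.inv k) = Groupoid.inv (u.map k) := by
        rw [Groupoid.inv_eq_inv, Groupoid.inv_eq_inv, Functor.map_inv]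
      have hf2 : q.map f = n := hf
      rw [Functor.map_comp, Functor.map_comp, ← hf2, einv, Category.assoc]
    have hw2 : (vertexHom (q ⋙ u) x) w =
        u.map k ≫ u.map (q.map f) ≫ Groupoid.inv (u.map k) :=
      hw.trans (Category.assoc _ _ _)
    show u.map (q.map w) = u.map (k * n * k⁻¹)
    rw [e2]
    exact hw2
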